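/- Let α, β, γ be real with γ ≠ 0 and set r = β/γ, s = α/γ, t = 1/γ. Let (V_n) be the generalized Tribonacci sequence with parameters r, s, t (V_0 = 0, V_1 = 1, V_2 = r). If (x_n)_{n ≥ -1} satisfies x_{n+1} = γ / (x_n(x_{n-1}+α)+β) and for each n ≥ -1 the expression t·V_n·x_{-1}·x_0 + (V_{n+2} - r·V_{n+1})·x_0 + V_{n+1} is nonzero, then for all n ≥ 0, x_n = (t·V_{n-1}·x_{-1}·x_0 + (V_{n+1} - r·V_n)·x_0 + V_n) / (t·V_n·x_{-1}·x_0 + (V_{n+2} - r·V_{n+1})·x_0 + V_{n+1}). -/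

import Mathlib

theorem stmt_3 (α β γ : ℝ) (hγ : γ ≠ 0)
    (r s t : ℝ) (hr : r = β / γ) (hs : s = α / γ) (ht : t = 1 / γ)
    (V : ℤ → ℝ) (hV0 : V 0 = 0) (hV1 : V 1 = 1) (hV2 : V 2 = r)
    (hV : ∀ n : ℤ, V (n + 3) = r * V (n + 2) + s * V (n + 1) + t * V n)
    (x : ℤ → ℝ)
    (hx : ∀ n : ℤ, 0 ≤ n → x (n + 1) = γ / (x n * (x (n - 1) + α) + β))
    (hden : ∀ n : ℤ, -1 ≤ n →
      t * V n * x (-1) * x 0 + (V (n + 2) - r * V (n + 1)) * x 0 + V (n + 1) ≠ 0) :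
    ∀ n : ℤ, 0 ≤ n →
      x n = (t * V (n - 1) * x (-1) * x 0 + (V (n + 1) - r * V n) * x 0 + V n) /
        (t * V n * x (-1) * x 0 + (V (n + 2) - r * V (n + 1)) * x 0 + V (n + 1)) := by
  subst hr hs ht
  have hVm1 : V (-1) = 0 := by
    have h := hV (-1)
    norm_num [hV1, hV2, hV0] at h
    tauto
  have hVm2 : V (-2) = γ := by
    have h := hV (-2)
    norm_num [hV1, hV0, hVm1] at h
    field_simp at h
    linarith
  obtain ⟨N, hN⟩ : ∃ N : ℤ → ℝ, ∀ n : ℤ,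
      N n = 1 / γ * V (n - 1) * x (-1) * x 0 + (V (n + 1) - β / γ * V n) * x 0 + V n :=
    ⟨fun n => 1 / γ * V (n - 1) * x (-1) * x 0 + (V (n + 1) - β / γ * V n) * x 0 + V n,
      fun n => rfl⟩
  have hNden : ∀ n : ℤ, 0 ≤ n → N n ≠ 0 := by
    intro n hn
    have h := hden (n - 1) (by linarith)
    have e1 : n - 1 + 2 = n + 1 := by ring
    have e2 : n - 1 + 1 = n := by ring
    rw [e1, e2] at h
    rw [hN n]
    exact h
  have hrec : ∀ n : ℤ, N (n - 1) + α * N n + β * N (n + 1) = γ * N (n + 2) := by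
    intro n
    have h1 := hV (n - 2)
    have h2 := hV (n - 1)
    have h3 := hV n
    have e1 : n - 2 + 3 = n + 1 := by ring
    have e2 : n - 2 + 2 = n := by ring
    have e3 : n - 2 + 1 = n - 1 := by ring
    have e4 : n - 1 + 3 = n + 2 := by ring
    have e5 : n - 1 + 2 = n + 1 := by ring
    have e6 : n - 1 + 1 = n := by ring
    rw [e1, e2, e3] at h1
    rw [e4, e5, e6] at h2
    rw [hN (n - 1), hN n, hN (n + 1), hN (n + 2)]
    have e7 : n - 1 - 1 = n - 2 := by ring
    have e9 : n + 1 - 1 = n := by ring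
    have e10 : n + 1 + 1 = n + 2 := by ring
    have e11 : n + 2 - 1 = n + 1 := by ring
    have e12 : n + 2 + 1 = n + 3 := by ring
    rw [e7, e6, e9, e10, e11, e12]
    rw [h3, h2, h1]
    field_simp
    ring
  have key : ∀ n : ℤ, -1 ≤ n →
      x n = N n / N (n + 1) ∧ x (n + 1) = N (n + 1) / N (n + 2) := by
    refine Int.le_induction ?_ ?_
    ·
      have hN0 : N 0 = x 0 := by rw [hN 0]; norm_num [hVm1, hV0, hV1]
      have hNm1 : N (-1) = x (-1) * x 0 := by
        rw [hN (-1)]; norm_num [hVm1, hVm2, hV0]; field_simp; simp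
      have hN1 : N 1 = 1 := by rw [hN 1]; norm_num [hV0, hV1, hV2]
      have hx0 : x 0 ≠ 0 := by
        have := hNden 0 le_rfl; rwa [hN0] at this
      constructor
      · rw [hNm1]
        norm_num [hN0]
        field_simp
      · norm_num [hN0, hN1]
    · intro n hn ih
      obtain ⟨ih1, ih2⟩ := ih
      have e2 : n + 1 + 1 = n + 2 := by ring
      have e3 : n + 1 + 2 = n + 3 := by ring
      rw [e2, e3]
      refine ⟨ih2, ?_⟩
      have hxe := hx (n + 1) (by linarith)
      have e : n + 1 - 1 = n := by ring
      rw [e] at hxe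
      have hrec' := hrec (n + 1)
      rw [e, e2, e3] at hrec'
      have h2 := hNden (n + 1) (by linarith)
      have h3 := hNden (n + 2) (by linarith)
      have h4 := hNden (n + 3) (by linarith)
      rw [e2] at hxe
      rw [hxe, ih1, ih2]
      have hD : N (n + 1) / N (n + 2) * (N n / N (n + 1) + α) + β
          = γ * N (n + 3) / N (n + 2) := by
        rw [← hrec']
        field_simp
      rw [hD, div_div_eq_mul_div, mul_div_mul_left _ _ hγ]
  intro n hn
  obtain ⟨h1, _⟩ := key n (by linarith)
  rw [h1, hN n, hN (n + 1)]
  have e1 : n + 1 - 1 = n := by ring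
  have e2 : n + 1 + 1 = n + 2 := by ring
  rw [e1, e2]
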